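/- Let C = D S be quasi-symmetric with positive entries, D = diag(d) positive diagonal, S symmetric, and A the diagonal matrix of column sums of C. Then the vector A d (componentwise product of column sums with d) is an eigenvector of the column-stochastic matrix C A⁻¹ with eigenvalue 1; i.e., undamped PageRank π is proportional to A d. -/

import Mathlib

open Matrix

theorem Ad_is_pagerank_eigenvector {n : ℕ}
    (d : Fin n → ℝ) (S C : Matrix (Fin n) (Fin n) ℝ)
    (hd : ∀ i, 0 < d i) (hS : S.IsSymm)
    (hC : C = Matrix.diagonal d * S) (hCpos : ∀ i j, 0 < C i j) :
    let A : Matrix (Fin n) (Fin n) ℝ := Matrix.diagonal (fun j => ∑ i, C i j)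
    (C * A⁻¹).mulVec (A.mulVec d) = A.mulVec d := by
  intro A
  funext i
  haveI : Nonempty (Fin n) := ⟨i⟩
  have hsum : ∀ j, (0:ℝ) < ∑ k, C k j := fun j =>
    Finset.sum_pos (fun k _ => hCpos k j) Finset.univ_nonempty
  have hAinv : A⁻¹ = Matrix.diagonal (fun j => (∑ k, C k j)⁻¹) := by
    refine Matrix.inv_eq_right_inv ?_
    rw [Matrix.diagonal_mul_diagonal]
    rw [show (fun j => (∑ k, C k j) * (∑ k, C k j)⁻¹) = fun _ => (1:ℝ) from
      funext fun j => mul_inv_cancel₀ (hsum j).ne']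
    exact Matrix.diagonal_one
  have hCS : ∀ a b, C a b = d a * S a b := by
    intro a b; simp [hC, Matrix.diagonal_mul]
  have hAd : ∀ j, A.mulVec d j = (∑ k, C k j) * d j := by
    intro j; simp [A, Matrix.mulVec_diagonal]
  have key : ∀ j, (C * A⁻¹) i j * (A.mulVec d j) = C i j * d j := by
    intro j
    rw [hAd, hAinv, Matrix.mul_diagonal]
    have h : (∑ k, C k j) ≠ 0 := (hsum j).ne'
    field_simp
  calc ((C * A⁻¹).mulVec (A.mulVec d)) i
      = ∑ j, (C * A⁻¹) i j * (A.mulVec d j) := rfl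
    _ = ∑ j, C i j * d j := by
        exact Finset.sum_congr rfl fun j _ => key j
    _ = (∑ k, C k i) * d i := by
        simp only [hCS]
        rw [Finset.sum_mul]
        refine Finset.sum_congr rfl fun j _ => ?_
        rw [hS.apply i j]
        ring
    _ = A.mulVec d i := (hAd i).symm
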